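/- arXiv:2107.08436 — 6 statements merged into one kernel-verified Lean document; each statement's English description precedes it below -/
import Mathlib

section
/- If the infinite Hessenberg-type matrix H with first column (d_0, d_1, d_2, ...) and whose (i,j)-entry for j ≥ 1 equals h_{i-j+1} (with h_m = 0 for m < 0) is totally positive, then the Riordan array R(d(t), h(t)), i.e., the matrix whose (n,k)-entry is the coefficient of t^n in d(t)·h(t)^k, is totally positive. -/
open PowerSeries

noncomputable section

/-- An infinite real matrix is totally positive if every finite minor
(with strictly increasing row and column indices) is nonnegative. -/
def TotallyPos (M : ℕ → ℕ → ℝ) : Prop :=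
  ∀ (k : ℕ) (r c : Fin k → ℕ), StrictMono r → StrictMono c →
    0 ≤ (Matrix.of fun i j => M (r i) (c j)).det

/-- The Riordan array R(d(t), h(t)): entry (n,k) is the coefficient of t^n in d * h^k. -/
def riordan (d h : PowerSeries ℝ) (n k : ℕ) : ℝ :=
  PowerSeries.coeff n (d * h ^ k)

/-- The lower triangular Toeplitz matrix of a sequence. -/
def toeplitz (a : ℕ → ℝ) (i j : ℕ) : ℝ :=
  if j ≤ i then a (i - j) else 0

/-- The Hessenberg matrix: first column (d₀,d₁,…), and entry (i,j) = h_{i-j+1} for j ≥ 1. -/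
def hess (d h : ℕ → ℝ) (i j : ℕ) : ℝ :=
  if j = 0 then d i else if j ≤ i + 1 then h (i + 1 - j) else 0

open Finset Equiv Matrix

private lemma cb_aux {k n : ℕ} (A : Matrix (Fin k) (Fin n) ℝ) (B : Matrix (Fin n) (Fin k) ℝ)
    {p : Fin k → Fin n} (hp : ¬Function.Injective p) :
    ∑ σ : Equiv.Perm (Fin k), (Equiv.Perm.sign σ : ℝ) * ∏ x, A (σ x) (p x) * B (p x) x = 0 := by
  obtain ⟨i, j, hpij, hij⟩ : ∃ i j, p i = p j ∧ i ≠ j := by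
    rw [Function.Injective] at hp; push_neg at hp
    obtain ⟨i, j, h1, h2⟩ := hp; exact ⟨i, j, h1, h2⟩
  exact
    sum_involution (fun σ _ => σ * Equiv.swap i j)
      (fun σ _ => by
        have : (∏ x, A (σ x) (p x)) = ∏ x, A ((σ * Equiv.swap i j) x) (p x) :=
          Fintype.prod_equiv (swap i j) _ _ (by simp [Equiv.apply_swap_eq_self hpij])
        simp [this, Equiv.Perm.sign_swap hij, prod_mul_distrib])
      (fun σ _ _ => (not_congr Equiv.mul_swap_eq_iff).mpr hij) (fun _ _ => mem_univ _)
      fun σ _ => Equiv.mul_swap_involutive i j σ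

theorem det_mul_nonneg {k n : ℕ} (A : Matrix (Fin k) (Fin n) ℝ) (B : Matrix (Fin n) (Fin k) ℝ)
    (hA : ∀ f : Fin k → Fin n, StrictMono f → 0 ≤ (A.submatrix id f).det)
    (hB : ∀ f : Fin k → Fin n, StrictMono f → 0 ≤ (B.submatrix f id).det) :
    0 ≤ (A * B).det := by
  classical
  have step1 : (A * B).det = ∑ p : Fin k → Fin n, ∑ σ : Equiv.Perm (Fin k),
      (Equiv.Perm.sign σ : ℝ) * ∏ i, A (σ i) (p i) * B (p i) i := by
    simp only [Matrix.det_apply', Matrix.mul_apply, Finset.prod_univ_sum, Finset.mul_sum,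
      Fintype.piFinset_univ]
    rw [Finset.sum_comm]
  set T : (Fin k → Fin n) → ℝ := fun p => ∑ σ : Equiv.Perm (Fin k),
      (Equiv.Perm.sign σ : ℝ) * ∏ i, A (σ i) (p i) * B (p i) i with hT
  let D := {f : Fin k → Fin n // StrictMono f}
  let G : D × Equiv.Perm (Fin k) → (Fin k → Fin n) := fun x => x.1.1 ∘ x.2
  have hGinj : Function.Injective G := by
    rintro ⟨⟨f, hf⟩, τ⟩ ⟨⟨g, hg⟩, ρ⟩ hfg
    have hfg' : f ∘ τ = g ∘ ρ := hfg
    have hrange : Set.range f = Set.range g := by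
      have h1 : Set.range (f ∘ τ) = Set.range (g ∘ ρ) := by rw [hfg']
      rwa [Set.range_comp, Set.range_comp, Equiv.range_eq_univ, Equiv.range_eq_univ,
        Set.image_univ, Set.image_univ] at h1
    haveI : WellFoundedLT (Fin k) := Finite.to_wellFoundedLT
    have hfgeq : f = g := (StrictMono.range_inj (β := Fin k) (γ := Fin n) hf hg).1 hrange
    subst hfgeq
    have : (τ : Fin k → Fin k) = ρ := by
      funext x
      exact hf.injective (congrFun hfg' x)
    exact Prod.ext (by rfl) (Equiv.coe_fn_injective this)
  have hGsurj : ∀ p : Fin k → Fin n, Function.Injective p → ∃ x, G x = p := by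
    intro p hp
    set s : Finset (Fin n) := Finset.univ.image p with hsdef
    have hs : s.card = k := by
      rw [hsdef, Finset.card_image_of_injective _ hp, Finset.card_univ, Fintype.card_fin]
    have hbij : Function.Bijective (fun i : Fin k => (⟨p i, Finset.mem_image_of_mem _ (Finset.mem_univ i)⟩ : {x // x ∈ s})) := by
      rw [Fintype.bijective_iff_injective_and_card]
      constructor
      · intro a b hab
        exact hp (congrArg Subtype.val hab)
      · simp [Fintype.card_coe, hs]
    let e1 : Fin k ≃ {x // x ∈ s} := Equiv.ofBijective _ hbij
    let τ : Equiv.Perm (Fin k) := e1.trans (s.orderIsoOfFin hs).toEquiv.symm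
    refine ⟨⟨⟨(s.orderEmbOfFin hs : Fin k → Fin n), (s.orderEmbOfFin hs).strictMono⟩, τ⟩, ?_⟩
    funext i
    show s.orderEmbOfFin hs (τ i) = p i
    have h2 : (s.orderIsoOfFin hs) (τ i) = e1 i := by
      simp [τ]
    rw [← Finset.coe_orderIsoOfFin_apply, h2]
    rfl
  rw [step1]
  have hzero : ∀ p ∈ Finset.univ, p ∉ Finset.univ.image G → T p = 0 := by
    intro p _ hpim
    apply cb_aux
    intro hp
    obtain ⟨x, hx⟩ := hGsurj p hp
    exact hpim (Finset.mem_image.2 ⟨x, Finset.mem_univ x, hx⟩)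
  have hsum : ∑ p : Fin k → Fin n, T p = ∑ x : D × Equiv.Perm (Fin k), T (G x) := by
    rw [← Finset.sum_image (fun x _ y _ h => hGinj h)]
    exact (Finset.sum_subset (Finset.subset_univ _) hzero).symm
  show (0:ℝ) ≤ ∑ p : Fin k → Fin n, T p
  rw [hsum, Fintype.sum_prod_type]
  apply Finset.sum_nonneg
  intro f _
  have key : ∀ τ : Equiv.Perm (Fin k), T (f.1 ∘ τ)
      = ((Equiv.Perm.sign τ : ℝ) * ∏ i, B (f.1 (τ i)) i) * (A.submatrix id f.1).det := by
    intro τ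
    rw [hT]
    simp only [Function.comp_apply]
    have hsplit : ∀ σ : Equiv.Perm (Fin k),
        (∏ i, A (σ i) (f.1 (τ i)) * B (f.1 (τ i)) i)
          = (∏ i, A ((σ * τ⁻¹) i) (f.1 i)) * ∏ i, B (f.1 (τ i)) i := by
      intro σ
      rw [Finset.prod_mul_distrib]
      congr 1
      rw [← Equiv.prod_comp τ (fun i => A ((σ * τ⁻¹) i) (f.1 i))]
      refine Finset.prod_congr rfl fun i _ => ?_
      simp [Equiv.Perm.mul_apply]
    calc ∑ σ : Equiv.Perm (Fin k), (Equiv.Perm.sign σ : ℝ) * ∏ i, A (σ i) (f.1 (τ i)) * B (f.1 (τ i)) i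
        = ∑ σ : Equiv.Perm (Fin k), (Equiv.Perm.sign σ : ℝ) *
            ((∏ i, A ((σ * τ⁻¹) i) (f.1 i)) * ∏ i, B (f.1 (τ i)) i) := by
          exact Finset.sum_congr rfl fun σ _ => by rw [hsplit σ]
      _ = ∑ ρ : Equiv.Perm (Fin k), (Equiv.Perm.sign (ρ * τ) : ℝ) *
            ((∏ i, A (ρ i) (f.1 i)) * ∏ i, B (f.1 (τ i)) i) := by
          refine (Fintype.sum_equiv (Equiv.mulRight τ) _ _ fun ρ => ?_).symm
          simp [mul_assoc]
      _ = ((Equiv.Perm.sign τ : ℝ) * ∏ i, B (f.1 (τ i)) i) * (A.submatrix id f.1).det := by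
          rw [Matrix.det_apply', Finset.mul_sum]
          refine Finset.sum_congr rfl fun ρ _ => ?_
          simp only [Equiv.Perm.sign_mul, Int.cast_mul, Matrix.submatrix_apply, id_eq]
          push_cast
          ring
  have : ∑ τ : Equiv.Perm (Fin k), T (f.1 ∘ τ)
      = (A.submatrix id f.1).det * (B.submatrix f.1 id).det := by
    rw [Finset.sum_congr rfl fun τ _ => key τ]
    rw [← Finset.sum_mul, mul_comm]
    congr 1
    rw [Matrix.det_apply']
    exact Finset.sum_congr rfl fun τ _ => rfl
  rw [this]
  exact mul_nonneg (hA f.1 f.2) (hB f.1 f.2)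

/-- `1 ⊕ M` : identity in the (0,0) corner. -/
def onePlus (M : ℕ → ℕ → ℝ) (i j : ℕ) : ℝ :=
  if i = 0 then (if j = 0 then 1 else 0) else if j = 0 then 0 else M (i-1) (j-1)

/-- Bounded-column total positivity. -/
def BTP (m : ℕ) (M : ℕ → ℕ → ℝ) : Prop :=
  ∀ (k : ℕ) (r c : Fin k → ℕ), StrictMono r → StrictMono c → (∀ j, c j < m) →
    0 ≤ (Matrix.of fun i j => M (r i) (c j)).det

lemma det_unit_corner {k : ℕ} (Q : Matrix (Fin (k+1)) (Fin (k+1)) ℝ)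
    (h00 : Q 0 0 = 1) (h0 : ∀ j : Fin k, Q 0 j.succ = 0) :
    Q.det = (Q.submatrix Fin.succ Fin.succ).det := by
  rw [Matrix.det_succ_row_zero]
  rw [Finset.sum_eq_single 0]
  · simp [h00, Fin.succAbove_zero]
  · intro j _ hj
    obtain ⟨j', rfl⟩ := Fin.exists_succ_eq.2 hj
    simp [h0 j']
  · simp

lemma btp_onePlus {m : ℕ} {M : ℕ → ℕ → ℝ} (hM : BTP m M) : BTP (m+1) (onePlus M) := by
  intro k s u hs hu hub
  match k with
  | 0 => simp [Matrix.det_fin_zero]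
  | k+1 =>
    by_cases hs0 : s 0 = 0
    · by_cases hu0 : u 0 = 0
      · rw [det_unit_corner]
        · have hQ : ((Matrix.of fun i j => onePlus M (s i) (u j)).submatrix Fin.succ Fin.succ)
              = Matrix.of fun (i j : Fin k) => M (s i.succ - 1) (u j.succ - 1) := by
            ext i j
            have hsi : s i.succ ≠ 0 := by
              have := hs (Fin.succ_pos i); omega
            have huj : u j.succ ≠ 0 := by
              have := hu (Fin.succ_pos j); omega
            simp [onePlus, hsi, huj]
          rw [hQ]
          apply hM k _ _ ?_ ?_ ?_
          · intro a b hab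
            have h1 := hs (Fin.succ_lt_succ_iff.2 hab)
            have h2 := hs (Fin.succ_pos a)
            try dsimp only
            omega
          · intro a b hab
            have h1 := hu (Fin.succ_lt_succ_iff.2 hab)
            have h2 := hu (Fin.succ_pos a)
            try dsimp only
            omega
          · intro j
            have h1 := hub j.succ
            have h2 := hu (Fin.succ_pos j)
            try dsimp only
            omega
        · simp [onePlus, hs0, hu0]
        · intro j
          have huj : u j.succ ≠ 0 := by have := hu (Fin.succ_pos j); omega
          simp [onePlus, hs0, huj]
      · apply le_of_eq
        symm
        apply Matrix.det_eq_zero_of_row_eq_zero 0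
        intro j
        have huj : u j ≠ 0 := by
          rcases Fin.eq_zero_or_eq_succ j with rfl | ⟨j', rfl⟩
          · exact hu0
          · have := hu (Fin.succ_pos j'); omega
        simp [onePlus, hs0, huj]
    · by_cases hu0 : u 0 = 0
      · apply le_of_eq
        symm
        apply Matrix.det_eq_zero_of_column_eq_zero 0
        intro i
        have hsi : s i ≠ 0 := by
          rcases Fin.eq_zero_or_eq_succ i with rfl | ⟨i', rfl⟩
          · exact hs0
          · have := hs (Fin.succ_pos i'); omega
        simp [onePlus, hsi, hu0]
      · have hQ : (Matrix.of fun i j => onePlus M (s i) (u j))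
            = Matrix.of fun (i j : Fin (k+1)) => M (s i - 1) (u j - 1) := by
          ext i j
          have hsi : s i ≠ 0 := by
            rcases Fin.eq_zero_or_eq_succ i with rfl | ⟨i', rfl⟩
            · exact hs0
            · have := hs (Fin.succ_pos i'); omega
          have huj : u j ≠ 0 := by
            rcases Fin.eq_zero_or_eq_succ j with rfl | ⟨j', rfl⟩
            · exact hu0
            · have := hu (Fin.succ_pos j'); omega
          simp [onePlus, hsi, huj]
        rw [hQ]
        apply hM (k+1) _ _ ?_ ?_ ?_
        · intro a b hab
          have h1 := hs hab
          have h2 : s 0 ≠ 0 := hs0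
          have h3 : s 0 ≤ s a := hs.monotone (Fin.zero_le a)
          try dsimp only
          omega
        · intro a b hab
          have h1 := hu hab
          have h2 : u 0 ≠ 0 := hu0
          have h3 : u 0 ≤ u a := hu.monotone (Fin.zero_le a)
          try dsimp only
          omega
        · intro j
          have h1 := hub j
          have h2 : u 0 ≠ 0 := hu0
          have h3 : u 0 ≤ u j := hu.monotone (Fin.zero_le j)
          try dsimp only
          omega

lemma riordan_entry (d h : ℕ → ℝ) (n c N : ℕ) (hn : n ≤ N) :
    riordan (PowerSeries.mk d) (PowerSeries.mk h) n c
      = ∑ x : Fin (N+2), hess d h n x *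
          onePlus (riordan (PowerSeries.mk d) (PowerSeries.mk h)) x c := by
  rw [Fin.sum_univ_eq_sum_range
    (fun x => hess d h n x * onePlus (riordan (PowerSeries.mk d) (PowerSeries.mk h)) x c)]
  cases c with
  | zero =>
    rw [Finset.sum_eq_single 0]
    · simp [riordan, hess, onePlus]
    · intro x _ hx
      simp [onePlus, hx]
    · simp
  | succ c =>
    have hLHS : riordan (PowerSeries.mk d) (PowerSeries.mk h) n (c+1)
        = ∑ a ∈ Finset.range (n+1), h a *
            riordan (PowerSeries.mk d) (PowerSeries.mk h) (n - a) c := by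
      have hmul : (PowerSeries.mk d) * (PowerSeries.mk h) ^ (c+1)
          = (PowerSeries.mk h) * ((PowerSeries.mk d) * (PowerSeries.mk h) ^ c) := by ring
      rw [riordan, hmul, PowerSeries.coeff_mul,
        Finset.Nat.sum_antidiagonal_eq_sum_range_succ_mk]
      simp [riordan, PowerSeries.coeff_mk]
    have hRHS : ∑ x ∈ Finset.range (N+2),
        hess d h n x * onePlus (riordan (PowerSeries.mk d) (PowerSeries.mk h)) x (c+1)
        = ∑ x ∈ Finset.range (n+1),
            h (n - x) * riordan (PowerSeries.mk d) (PowerSeries.mk h) x c := by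
      rw [show Finset.range (N+2) = Finset.range (n+2) ∪ (Finset.range (N+2) \ Finset.range (n+2))
        from by rw [Finset.union_sdiff_of_subset]; exact Finset.range_subset_range.2 (by omega)]
      rw [Finset.sum_union (Finset.disjoint_sdiff)]
      have hzero : ∑ x ∈ Finset.range (N+2) \ Finset.range (n+2),
          hess d h n x * onePlus (riordan (PowerSeries.mk d) (PowerSeries.mk h)) x (c+1) = 0 := by
        apply Finset.sum_eq_zero
        intro x hx
        simp only [Finset.mem_sdiff, Finset.mem_range] at hx
        have hx1 : x ≠ 0 := by omega
        have hx2 : ¬ (x ≤ n + 1) := by omega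
        simp [hess, hx1, hx2]
      rw [hzero, add_zero, Finset.sum_range_succ']
      have hg0 : hess d h n 0 * onePlus (riordan (PowerSeries.mk d) (PowerSeries.mk h)) 0 (c+1) = 0 := by
        simp [onePlus]
      rw [hg0, add_zero]
      apply Finset.sum_congr rfl
      intro x hx
      simp only [Finset.mem_range] at hx
      have h2 : x + 1 ≠ 0 := by omega
      have h3 : x + 1 ≤ n + 1 := by omega
      have h4 : n + 1 - (x + 1) = n - x := by omega
      simp [hess, onePlus, h2, h3, h4]
    rw [hLHS, hRHS, ← Finset.sum_range_reflect]
    apply Finset.sum_congr rfl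
    intro j hj
    simp only [Finset.mem_range] at hj
    have e1 : n + 1 - 1 - j = n - j := by omega
    have e2 : n - (n - j) = j := by omega
    rw [e1, e2]

lemma btp_riordan (d h : ℕ → ℝ) (hH : TotallyPos (hess d h)) :
    ∀ m, BTP m (riordan (PowerSeries.mk d) (PowerSeries.mk h)) := by
  intro m
  induction m with
  | zero =>
    intro k r c hr hc hb
    match k with
    | 0 => simp [Matrix.det_fin_zero]
    | k+1 => exact absurd (hb 0) (Nat.not_lt_zero _)
  | succ m ih =>
    intro k r c hr hc hb
    match k with
    | 0 => simp [Matrix.det_fin_zero]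
    | k+1 =>
      set N := r (Fin.last k) with hN
      have hrN : ∀ i, r i ≤ N := fun i => hr.monotone (Fin.le_last i)
      have hfac : (Matrix.of fun i j => riordan (PowerSeries.mk d) (PowerSeries.mk h) (r i) (c j))
          = (Matrix.of fun (i : Fin (k+1)) (x : Fin (N+2)) => hess d h (r i) (x : ℕ))
            * (Matrix.of fun (x : Fin (N+2)) (j : Fin (k+1)) =>
                onePlus (riordan (PowerSeries.mk d) (PowerSeries.mk h)) (x : ℕ) (c j)) := by
        ext i j
        rw [Matrix.mul_apply]
        exact riordan_entry d h (r i) (c j) N (hrN i)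
      rw [hfac]
      apply det_mul_nonneg
      · intro f hf
        have hmono : StrictMono (fun j => ((f j : Fin (N+2)) : ℕ)) := fun a b hab => hf hab
        exact hH (k+1) r (fun j => ((f j : Fin (N+2)) : ℕ)) hr hmono
      · intro f hf
        have hmono : StrictMono (fun x => ((f x : Fin (N+2)) : ℕ)) := fun a b hab => hf hab
        exact btp_onePlus ih (k+1) (fun x => ((f x : Fin (N+2)) : ℕ)) c hmono hc hb

theorem stmt0 (d h : ℕ → ℝ)
    (hH : TotallyPos (hess d h)) :
    TotallyPos (riordan (PowerSeries.mk d) (PowerSeries.mk h)) := by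
  intro k r c hr hc
  match k with
  | 0 => simp [Matrix.det_fin_zero]
  | k+1 =>
    exact btp_riordan d h hH (c (Fin.last k) + 1) (k+1) r c hr hc
      (fun j => Nat.lt_succ_of_le (hc.monotone (Fin.le_last j)))
end
end

section
/- Let R = [r_{n,k}] be the Riordan array R(d(t), h(t)), let R[n] denote the submatrix of R consisting of its first n+1 columns, and let H be the matrix with H_{i,0} = d_i and H_{i,j} = h_{i-j+1} for j ≥ 1 (with h_m = 0 for m < 0). Then R[n+1] = H · (1 ⊕ R[n]), where 1 ⊕ R[n] is the block diagonal matrix with a 1×1 block equal to 1 followed by R[n]. -/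
open PowerSeries

noncomputable section

/-- The block matrix 1 ⊕ R[n] viewed as an infinite-by-(n+2) array, extended by the
Riordan entries; entry (j,k) for the product identity. -/
def oplusRiordan (d h : PowerSeries ℝ) (j k : ℕ) : ℝ :=
  if j = 0 then (if k = 0 then 1 else 0)
  else if k = 0 then 0 else riordan d h (j - 1) (k - 1)

theorem stmt1 (d h : PowerSeries ℝ) (n : ℕ) :
    ∀ i k, k ≤ n + 1 →
      riordan d h i k =
        ∑ j ∈ Finset.range (i + 2), hess (fun m => coeff m d) (fun m => coeff m h) i j *
          oplusRiordan d h j k := by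
  intro i k _
  rcases k with _ | m
  · rw [Finset.sum_eq_single 0]
    · simp [hess, oplusRiordan, riordan]
    · intro j _ hj0; simp [oplusRiordan, hj0]
    · intro h0; exact absurd (Finset.mem_range.mpr (by omega)) h0
  · rw [Finset.sum_range_succ']
    have lhs : riordan d h i (m + 1)
        = ∑ s ∈ Finset.range (i + 1), riordan d h s m * coeff (i - s) h := by
      rw [riordan, pow_succ, ← mul_assoc, coeff_mul,
        Finset.Nat.sum_antidiagonal_eq_sum_range_succ (fun a b => coeff a (d * h ^ m) * coeff b h)]
      rfl
    rw [lhs]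
    simp only [oplusRiordan, hess]
    simp only [Nat.succ_ne_zero, if_false, Nat.add_sub_cancel]
    simp only [if_true, mul_zero, add_zero]
    apply Finset.sum_congr rfl
    intro s hs
    rw [Finset.mem_range] at hs
    rw [if_pos (by omega : s + 1 ≤ i + 1)]
    have : i + 1 - (s + 1) = i - s := by omega
    rw [this, mul_comm]
end
end

section
/- If h(t) = Σ_{n≥1} h_n t^n is a formal power series with h(0) = 0 whose coefficient sequence is a Pólya frequency sequence, then the Lagrange-type Riordan array R(1, h(t)) is totally positive. -/
open PowerSeries

noncomputable section

open Finset Equiv Matrix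

/-- Cauchy–Binet style nonnegativity: if all maximal minors of `A` (with increasing
columns) and of `B` (with increasing rows) are nonnegative, then `det (A * B) ≥ 0`. -/
lemma cb_nonneg {k n : ℕ} (A : Matrix (Fin k) (Fin n) ℝ) (B : Matrix (Fin n) (Fin k) ℝ)
    (hA : ∀ s : Fin k → Fin n, StrictMono s → 0 ≤ (A.submatrix id s).det)
    (hB : ∀ s : Fin k → Fin n, StrictMono s → 0 ≤ (B.submatrix s id).det) :
    0 ≤ (A * B).det := by
  classical
  have step1 : (A * B).det
      = ∑ f : Fin k → Fin n, (∏ i, B (f i) i) * (A.submatrix id f).det := by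
    simp only [Matrix.det_apply', Matrix.mul_apply, Matrix.submatrix_apply, id_eq,
      Finset.prod_univ_sum, Fintype.piFinset_univ, Finset.mul_sum]
    rw [Finset.sum_comm]
    refine Finset.sum_congr rfl fun f _ => Finset.sum_congr rfl fun σ _ => ?_
    rw [Finset.prod_mul_distrib]
    ring
  have step2 : (A * B).det
      = ∑ f ∈ Finset.univ.filter (fun f : Fin k → Fin n => Function.Injective f),
          (∏ i, B (f i) i) * (A.submatrix id f).det := by
    rw [step1]
    symm
    apply Finset.sum_subset (Finset.filter_subset _ _)
    intro f _ hf
    have hnf : ¬ Function.Injective f := by simpa using hf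
    obtain ⟨i, j, hij, hne⟩ := Function.not_injective_iff.mp hnf
    rw [Matrix.det_zero_of_column_eq hne (fun m => by simp [Matrix.submatrix_apply, hij])]
    ring
  have step3 :
      ∑ p ∈ (Finset.univ.filter fun s : Fin k → Fin n => StrictMono s) ×ˢ
          (Finset.univ : Finset (Perm (Fin k))),
        (∏ i, B (p.1 (p.2 i)) i) * (A.submatrix id (p.1 ∘ p.2)).det
      = ∑ f ∈ Finset.univ.filter (fun f : Fin k → Fin n => Function.Injective f),
          (∏ i, B (f i) i) * (A.submatrix id f).det := by
    apply Finset.sum_bij (fun p _ => p.1 ∘ p.2)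
    · rintro ⟨s, σ⟩ hp
      have hs : StrictMono s := by simpa using (Finset.mem_product.mp hp).1
      simp only [Finset.mem_filter, Finset.mem_univ, true_and]
      exact hs.injective.comp σ.injective
    · rintro ⟨s₁, σ₁⟩ hp₁ ⟨s₂, σ₂⟩ hp₂ hco
      have hs₁ : StrictMono s₁ := by simpa using (Finset.mem_product.mp hp₁).1
      have hs₂ : StrictMono s₂ := by simpa using (Finset.mem_product.mp hp₂).1
      have hrange : Set.range s₁ = Set.range s₂ := by
        rw [← σ₁.surjective.range_comp s₁, ← σ₂.surjective.range_comp s₂]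
        exact congrArg Set.range hco
      haveI : WellFoundedLT (Fin k) := inferInstance
      have hs : s₁ = s₂ := (StrictMono.range_inj hs₁ hs₂).mp hrange
      subst hs
      have hσ : σ₁ = σ₂ := Equiv.ext fun i => hs₁.injective (congrFun hco i)
      rw [hσ]
    · intro f hf
      have hfi : Function.Injective f := by simpa using hf
      set S : Finset (Fin n) := Finset.univ.image f with hSdef
      have hS : S.card = k := by
        rw [hSdef, Finset.card_image_of_injective _ hfi, Finset.card_univ, Fintype.card_fin]
      have hrange : Set.range f = ↑S := by
        rw [hSdef, Finset.coe_image, Finset.coe_univ, Set.image_univ]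
      set σ : Fin k ≃ Fin k :=
        (Equiv.ofInjective f hfi).trans ((Equiv.setCongr hrange).trans
          (S.orderIsoOfFin hS).symm.toEquiv) with hσdef
      refine ⟨⟨⇑(S.orderEmbOfFin hS), σ⟩, ?_, ?_⟩
      · simp only [Finset.mem_product, Finset.mem_filter, Finset.mem_univ, true_and, and_true]
        exact (S.orderEmbOfFin hS).strictMono
      · funext j
        show S.orderEmbOfFin hS (σ j) = f j
        rw [← Finset.coe_orderIsoOfFin_apply]
        simp only [hσdef, Equiv.trans_apply]
        exact congrArg Subtype.val ((S.orderIsoOfFin hS).apply_symm_apply _)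
    · intro p hp
      rfl
  have step4 :
      ∑ p ∈ (Finset.univ.filter fun s : Fin k → Fin n => StrictMono s) ×ˢ
          (Finset.univ : Finset (Perm (Fin k))),
        (∏ i, B (p.1 (p.2 i)) i) * (A.submatrix id (p.1 ∘ p.2)).det
      = ∑ s ∈ Finset.univ.filter (fun s : Fin k → Fin n => StrictMono s),
          (A.submatrix id s).det * (B.submatrix s id).det := by
    rw [Finset.sum_product]
    refine Finset.sum_congr rfl fun s _ => ?_
    have hperm : ∀ σ : Perm (Fin k),
        (A.submatrix id (s ∘ σ)).det
          = ((Perm.sign σ : ℤ) : ℝ) * (A.submatrix id s).det := by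
      intro σ
      have : A.submatrix id (s ∘ ⇑σ) = (A.submatrix id s).submatrix id ⇑σ := by
        rw [Matrix.submatrix_submatrix]
        rfl
      rw [this, Matrix.det_permute']
    calc ∑ σ : Perm (Fin k), (∏ i, B (s (σ i)) i) * (A.submatrix id (s ∘ σ)).det
        = (A.submatrix id s).det *
            ∑ σ : Perm (Fin k), ((Perm.sign σ : ℤ) : ℝ) * ∏ i, (B.submatrix s id) (σ i) i := by
          rw [Finset.mul_sum]
          refine Finset.sum_congr rfl fun σ _ => ?_
          rw [hperm σ]
          simp only [Matrix.submatrix_apply, id_eq]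
          ring
      _ = (A.submatrix id s).det * (B.submatrix s id).det := by
          rw [← Matrix.det_apply']
  rw [step2, ← step3, step4]
  refine Finset.sum_nonneg fun s hs => ?_
  have hsm : StrictMono s := by simpa using hs
  exact mul_nonneg (hA s hsm) (hB s hsm)

section Riordan

variable (h : PowerSeries ℝ)

lemma riordan_rec (h0 : constantCoeff h = 0) (n k N : ℕ) (hnN : n ≤ N) :
    riordan 1 h (n + 1) (k + 1)
      = ∑ m : Fin (N + 1), toeplitz (fun i => coeff i h) (n + 1) m.val
          * riordan 1 h m.val k := by
  have a0 : coeff 0 h = 0 := by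
    simpa [PowerSeries.coeff_zero_eq_constantCoeff] using h0
  have rec1 : riordan 1 h (n + 1) (k + 1)
      = ∑ m ∈ Finset.range (n + 2),
          riordan 1 h m k * toeplitz (fun i => coeff i h) (n + 1) m := by
    show coeff (n + 1) (1 * h ^ (k + 1)) = _
    rw [one_mul, pow_succ, PowerSeries.coeff_mul,
      Finset.Nat.sum_antidiagonal_eq_sum_range_succ_mk]
    refine Finset.sum_congr rfl fun m hm => ?_
    have hm' : m ≤ n + 1 := by
      have := Finset.mem_range.mp hm; omega
    rw [toeplitz, if_pos hm']
    congr 1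
    show _ = coeff m (1 * h ^ k)
    rw [one_mul]
  have rec1' : riordan 1 h (n + 1) (k + 1)
      = ∑ m ∈ Finset.range (n + 1),
          riordan 1 h m k * toeplitz (fun i => coeff i h) (n + 1) m := by
    rw [rec1, Finset.sum_range_succ]
    have hz : toeplitz (fun i => coeff i h) (n + 1) (n + 1) = 0 := by
      rw [toeplitz, if_pos le_rfl]
      simpa using a0
    rw [hz, mul_zero, add_zero]
  have vanish : ∀ x ∈ Finset.range (N + 1), x ∉ Finset.range (n + 1) →
      riordan 1 h x k * toeplitz (fun i => coeff i h) (n + 1) x = 0 := by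
    intro x _ hx
    have hx1 : n + 1 ≤ x := by
      by_contra hc; exact hx (Finset.mem_range.mpr (by omega))
    have hz : toeplitz (fun i => coeff i h) (n + 1) x = 0 := by
      rcases eq_or_lt_of_le hx1 with he | hl
      · rw [toeplitz, if_pos (le_of_eq he.symm)]
        simp only [← he, Nat.sub_self]
        exact a0
      · rw [toeplitz, if_neg (by omega)]
    rw [hz, mul_zero]
  rw [rec1',
    Finset.sum_subset (Finset.range_subset_range.mpr (by omega : n + 1 ≤ N + 1)) vanish,
    Fin.sum_univ_eq_sum_range
      (fun m => toeplitz (fun i => coeff i h) (n + 1) m * riordan 1 h m k) (N + 1)]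
  exact Finset.sum_congr rfl fun m _ => mul_comm _ _

lemma posStep (h0 : constantCoeff h = 0)
    (hPF : TotallyPos (toeplitz (fun n => coeff n h)))
    (k : ℕ) (r c : Fin k → ℕ) (hr : StrictMono r) (hc : StrictMono c)
    (hr1 : ∀ i, 1 ≤ r i) (hc1 : ∀ j, 1 ≤ c j)
    (hrec : ∀ s : Fin k → ℕ, StrictMono s →
      0 ≤ (Matrix.of fun i j => riordan 1 h (s i) (c j - 1)).det) :
    0 ≤ (Matrix.of fun i j => riordan 1 h (r i) (c j)).det := by
  classical
  set N := Finset.univ.sup r with hN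
  have hrN : ∀ i, r i ≤ N := fun i => Finset.le_sup (Finset.mem_univ i)
  set A : Matrix (Fin k) (Fin (N + 1)) ℝ :=
    Matrix.of fun i m => toeplitz (fun n => coeff n h) (r i) m.val with hA
  set B : Matrix (Fin (N + 1)) (Fin k) ℝ :=
    Matrix.of fun m j => riordan 1 h m.val (c j - 1) with hB
  have hAB : (Matrix.of fun i j => riordan 1 h (r i) (c j)) = A * B := by
    ext i j
    rw [Matrix.mul_apply]
    show riordan 1 h (r i) (c j) = _
    have h1 : r i = (r i - 1) + 1 := (Nat.succ_pred_eq_of_pos (hr1 i)).symm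
    have h2 : c j = (c j - 1) + 1 := (Nat.succ_pred_eq_of_pos (hc1 j)).symm
    rw [h1, h2, riordan_rec h h0 (r i - 1) (c j - 1) N (by have := hrN i; omega)]
    refine Finset.sum_congr rfl fun m _ => ?_
    rw [← h1]
    rfl
  rw [hAB]
  apply cb_nonneg
  · intro s hs
    exact hPF k r (fun j => (s j).val) hr (Fin.val_strictMono.comp hs)
  · intro s hs
    exact hrec (fun i => (s i).val) (Fin.val_strictMono.comp hs)

end Riordan

theorem stmt7 (h : PowerSeries ℝ) (h0 : constantCoeff h = 0)
    (hPF : TotallyPos (toeplitz (fun n => coeff n h))) :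
    TotallyPos (riordan 1 h) := by
  have Rn0 : ∀ n, riordan 1 h n 0 = if n = 0 then 1 else 0 := by
    intro n
    show coeff n (1 * h ^ 0) = _
    rw [pow_zero, mul_one, PowerSeries.coeff_one]
  have R0m : ∀ m, riordan 1 h 0 m = if m = 0 then 1 else 0 := by
    intro m
    show coeff 0 (1 * h ^ m) = _
    rw [one_mul, PowerSeries.coeff_zero_eq_constantCoeff, map_pow, h0]
    exact zero_pow_eq m
  suffices H : ∀ S k (r c : Fin k → ℕ), StrictMono r → StrictMono c → (∑ j, c j) ≤ S →
      0 ≤ (Matrix.of fun i j => riordan 1 h (r i) (c j)).det by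
    intro k r c hr hc
    exact H (∑ j, c j) k r c hr hc le_rfl
  intro S
  induction S using Nat.strong_induction_on with
  | _ S IH =>
    intro k r c hr hc hS
    match k with
    | 0 => simp [Matrix.det_fin_zero]
    | k + 1 =>
      rcases Nat.eq_zero_or_pos (c 0) with hc0 | hc0
      · rcases Nat.eq_zero_or_pos (r 0) with hr0 | hr0
        · -- r 0 = 0, c 0 = 0 : expand along first column
          have key : (Matrix.of fun i j => riordan 1 h (r i) (c j)).det
              = (Matrix.of fun (i j : Fin k) =>
                  riordan 1 h (r i.succ) (c j.succ)).det := by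
            rw [Matrix.det_succ_column_zero, Fin.sum_univ_succ]
            have h00 : riordan 1 h (r 0) (c 0) = 1 := by
              rw [hr0, hc0, R0m]; simp
            have hz : ∀ i : Fin k, riordan 1 h (r i.succ) (c 0) = 0 := by
              intro i
              rw [hc0, Rn0, if_neg]
              have : r 0 < r i.succ := hr (Fin.succ_pos i)
              omega
            have hsum : ∑ i : Fin k,
                (-1 : ℝ) ^ ((i.succ : Fin (k+1)) : ℕ) *
                  (Matrix.of fun i j => riordan 1 h (r i) (c j)) i.succ 0 *
                  ((Matrix.of fun i j => riordan 1 h (r i) (c j)).submatrix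
                    i.succ.succAbove Fin.succ).det = 0 := by
              refine Finset.sum_eq_zero fun i _ => ?_
              have : (Matrix.of fun i j => riordan 1 h (r i) (c j)) i.succ 0 = 0 := hz i
              rw [this, mul_zero, zero_mul]
            rw [hsum, add_zero]
            have : (Matrix.of fun i j => riordan 1 h (r i) (c j)) 0 0 = 1 := h00
            rw [this]
            rw [Fin.succAbove_zero]
            simp only [Fin.val_zero, pow_zero, one_mul, mul_one]
            rfl
          rw [key]
          apply posStep h h0 hPF k (fun i => r i.succ) (fun j => c j.succ)
            (hr.comp Fin.strictMono_succ) (hc.comp Fin.strictMono_succ)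
          · intro i
            have : r 0 < r i.succ := hr (Fin.succ_pos i)
            omega
          · intro j
            have : c 0 < c j.succ := hc (Fin.succ_pos j)
            omega
          · intro s hs
            match k with
            | 0 => simp [Matrix.det_fin_zero]
            | k' + 1 =>
              have hcs1 : ∀ j : Fin (k' + 1), 1 ≤ c j.succ := fun j => by
                have : c 0 < c j.succ := hc (Fin.succ_pos j); omega
              have hlt : (∑ j : Fin (k' + 1), (c j.succ - 1)) < S := by
                have h1 : (∑ j : Fin (k' + 1), (c j.succ - 1))
                    < ∑ j : Fin (k' + 1), c j.succ := by
                  apply Finset.sum_lt_sum (fun j _ => Nat.sub_le _ _)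
                  exact ⟨0, Finset.mem_univ _, by have := hcs1 0; omega⟩
                have h2 : (∑ j : Fin (k' + 1), c j.succ) ≤ ∑ j, c j := by
                  conv_rhs => rw [Fin.sum_univ_succ]
                  exact Nat.le_add_left _ _
                omega
              exact IH _ hlt _ s (fun j => c j.succ - 1) hs
                (fun i j hij => by
                  have h1 := hc (Fin.strictMono_succ hij)
                  have h2 := hcs1 i
                  show c i.succ - 1 < c j.succ - 1
                  omega) le_rfl
        · -- c 0 = 0, r 0 ≥ 1 : first column is zero
          have : (Matrix.of fun i j => riordan 1 h (r i) (c j)).det = 0 := by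
            apply Matrix.det_eq_zero_of_column_eq_zero 0
            intro i
            show riordan 1 h (r i) (c 0) = 0
            rw [hc0, Rn0, if_neg]
            have : r 0 ≤ r i := hr.monotone (Fin.zero_le i)
            omega
          rw [this]
      · rcases Nat.eq_zero_or_pos (r 0) with hr0 | hr0
        · -- r 0 = 0, c 0 ≥ 1 : first row is zero
          have : (Matrix.of fun i j => riordan 1 h (r i) (c j)).det = 0 := by
            apply Matrix.det_eq_zero_of_row_eq_zero 0
            intro j
            show riordan 1 h (r 0) (c j) = 0
            rw [hr0, R0m, if_neg]
            have : c 0 ≤ c j := hc.monotone (Fin.zero_le j)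
            omega
          rw [this]
        · -- both positive
          have hc1 : ∀ j, 1 ≤ c j := fun j =>
            le_trans hc0 (hc.monotone (Fin.zero_le j))
          have hr1 : ∀ i, 1 ≤ r i := fun i =>
            le_trans hr0 (hr.monotone (Fin.zero_le i))
          apply posStep h h0 hPF _ r c hr hc hr1 hc1
          intro s hs
          have hlt : (∑ j : Fin (k + 1), (c j - 1)) < S := by
            have h1 : (∑ j : Fin (k + 1), (c j - 1)) < ∑ j : Fin (k + 1), c j := by
              apply Finset.sum_lt_sum (fun j _ => Nat.sub_le _ _)
              exact ⟨0, Finset.mem_univ _, by have := hc1 0; omega⟩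
            omega
          exact IH _ hlt _ s (fun j => c j - 1) hs
            (fun i j hij => by
              have h1 := hc hij
              have h2 := hc1 i
              show c i - 1 < c j - 1
              omega) le_rfl
end
end

section
/- The Lucas matrix L = [L_{n,k}]_{n,k≥0}, where L_{n,k} is the coefficient of x^k in the n-th Lucas polynomial, equals the Riordan array R((2−t)/(1−t), t²/(1−t)); that is, for every k ≥ 0, the generating function Σ_{n≥0} L_{n,k} t^n equals ((2−t)/(1−t))·(t²/(1−t))^k. -/
open PowerSeries

noncomputable section

/-- Lucas polynomials: L₀ = 2, L₁ = 1, L_{n+2} = L_{n+1} + x·L_n. -/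
def lucas : ℕ → Polynomial ℝ
  | 0 => 2
  | 1 => 1
  | n + 2 => lucas (n + 1) + Polynomial.X * lucas n

lemma lucas_coeff_zero : ∀ n : ℕ, (lucas n).coeff 0 = if n = 0 then 2 else 1
  | 0 => by simp [lucas]
  | 1 => by simp [lucas]
  | n + 2 => by
    rw [lucas]
    simp [Polynomial.coeff_add, Polynomial.mul_coeff_zero, lucas_coeff_zero (n + 1)]

lemma keyrec (k : ℕ) :
    ((1 : PowerSeries ℝ) - X) * PowerSeries.mk (fun n => (lucas n).coeff (k + 1)) =
      X ^ 2 * PowerSeries.mk (fun n => (lucas n).coeff k) := by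
  ext n
  rw [sub_mul, one_mul, map_sub]
  match n with
  | 0 => simp [lucas, coeff_X_pow_mul', Polynomial.coeff_one]
  | 1 =>
    rw [coeff_succ_X_mul]
    simp [lucas, coeff_X_pow_mul', Polynomial.coeff_one]
  | n + 2 =>
    rw [coeff_succ_X_mul, coeff_X_pow_mul]
    simp only [coeff_mk]
    rw [lucas]
    simp [Polynomial.coeff_add, Polynomial.coeff_X_mul]

lemma hser : ((1 : PowerSeries ℝ) - X) *
    PowerSeries.mk (fun n => if n ≤ 1 then (0 : ℝ) else 1) = X ^ 2 := by
  ext n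
  rw [sub_mul, one_mul, map_sub]
  match n with
  | 0 => simp
  | 1 => rw [coeff_succ_X_mul]; simp [coeff_X_pow]
  | n + 2 =>
    rw [coeff_succ_X_mul]
    simp only [coeff_mk, coeff_X_pow]
    rcases n with _ | m
    · norm_num
    · have h1 : ¬ (m + 1 + 2 ≤ 1) := by omega
      have h2 : ¬ (m + 1 + 1 ≤ 1) := by omega
      have h3 : ¬ (m + 1 + 2 = 2) := by omega
      simp [h1, h2, h3]

lemma one_sub_X_ne : ((1 : PowerSeries ℝ) - X) ≠ 0 := by
  intro h
  have := congrArg (constantCoeff (R := ℝ)) h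
  simp at this

theorem stmt12 :
    ∀ k : ℕ, PowerSeries.mk (fun n => (lucas n).coeff k) =
      PowerSeries.mk (fun n => if n = 0 then (2 : ℝ) else 1) *
        (PowerSeries.mk (fun n => if n ≤ 1 then (0 : ℝ) else 1)) ^ k := by
  intro k
  induction k with
  | zero =>
    ext n
    rcases n with _ | m <;> simp [lucas_coeff_zero]
  | succ k ih =>
    apply mul_left_cancel₀ one_sub_X_ne
    rw [keyrec k, ih, pow_succ]
    calc X ^ 2 * (PowerSeries.mk (fun n => if n = 0 then (2 : ℝ) else 1) *
          (PowerSeries.mk (fun n => if n ≤ 1 then (0 : ℝ) else 1)) ^ k)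
        = (((1 : PowerSeries ℝ) - X) *
            PowerSeries.mk (fun n => if n ≤ 1 then (0 : ℝ) else 1)) *
          (PowerSeries.mk (fun n => if n = 0 then (2 : ℝ) else 1) *
          (PowerSeries.mk (fun n => if n ≤ 1 then (0 : ℝ) else 1)) ^ k) := by rw [hser]
      _ = _ := by ring
end
end

section
/- The infinite matrix H with first column (2, 1, 1, 1, ...) and, for j ≥ 1, (i,j)-entry equal to 1 if i ≥ j+1 and 0 otherwise (i.e., the Hessenberg matrix built from d(t) = (2−t)/(1−t) and h(t) = t²/(1−t)) is totally positive. -/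
open PowerSeries

noncomputable section

lemma prefix_det_nonneg : ∀ (k : ℕ) (P : Fin k → Fin k → Prop) [DecidableRel P],
    (∀ (i j j' : Fin k), j' ≤ j → P i j → P i j') →
    (∀ (i i' j : Fin k), i ≤ i' → P i j → P i' j) →
    0 ≤ (Matrix.of fun i j => if P i j then (1:ℝ) else 0).det := by
  intro k
  induction k with
  | zero => intro P _ _ _; simp [Matrix.det_fin_zero]
  | succ k ih =>
    intro P _ hj hi
    by_cases hcol : ∃ i, P i (Fin.last k)
    · obtain ⟨i0, hi0⟩ := hcol
      have hlast : P (Fin.last k) (Fin.last k) := hi _ _ _ (Fin.le_last i0) hi0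
      by_cases hmid : ∃ i : Fin (k+1), i ≠ Fin.last k ∧ P i (Fin.last k)
      · obtain ⟨i1, hne, hP⟩ := hmid
        have hrow : (Matrix.of fun i j => if P i j then (1:ℝ) else 0) i1 =
            (Matrix.of fun i j => if P i j then (1:ℝ) else 0) (Fin.last k) := by
          funext j
          simp only [Matrix.of_apply]
          rw [if_pos (hj _ _ _ (Fin.le_last j) hP), if_pos (hj _ _ _ (Fin.le_last j) hlast)]
        rw [Matrix.det_zero_of_row_eq hne hrow]
      · push_neg at hmid
        rw [Matrix.det_succ_column _ (Fin.last k)]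
        rw [Finset.sum_eq_single (Fin.last k)]
        · have h2 : ((Fin.last k : ℕ) + (Fin.last k : ℕ)) = 2 * k := by
            simp [Fin.val_last]; ring
          rw [h2, pow_mul]
          simp only [neg_one_sq, one_pow, one_mul, Matrix.of_apply, if_pos hlast]
          have : ((Matrix.of fun i j => if P i j then (1:ℝ) else 0).submatrix
              (Fin.last k).succAbove (Fin.last k).succAbove) =
              Matrix.of fun i j : Fin k => if P i.castSucc j.castSucc then (1:ℝ) else 0 := by
            ext i j
            simp [Fin.succAbove_last]
          rw [this]
          exact ih (fun i j => P i.castSucc j.castSucc)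
            (fun i j j' h hp => hj _ _ _ (by simpa using h) hp)
            (fun i i' j h hp => hi _ _ _ (by simpa using h) hp)
        · intro i _ hne
          have : ¬ P i (Fin.last k) := fun h => hne (by
            by_contra hne'
            exact (hmid i hne') h)
          simp [this]
        · simp
    · push_neg at hcol
      rw [Matrix.det_eq_zero_of_column_eq_zero (Fin.last k)]
      intro i
      simp [hcol i]

theorem stmt13 :
    TotallyPos (hess (fun n => if n = 0 then 2 else 1) (fun n => if n ≤ 1 then 0 else 1)) := by
  intro k r c hr hc
  have entry : ∀ (i j : Fin k), c j ≠ 0 →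
      hess (fun n => if n = 0 then 2 else 1) (fun n => if n ≤ 1 then 0 else 1) (r i) (c j)
        = if c j + 1 ≤ r i then 1 else 0 := by
    intro i j hcj
    simp only [hess, if_neg hcj]
    split_ifs <;> first | rfl | (exfalso; omega)
  by_cases hc0 : ∀ j, c j ≠ 0
  · have heq : (Matrix.of fun i j =>
        hess (fun n => if n = 0 then 2 else 1) (fun n => if n ≤ 1 then 0 else 1) (r i) (c j))
        = Matrix.of fun i j => if c j + 1 ≤ r i then (1:ℝ) else 0 := by
      ext i j
      simpa using entry i j (hc0 j)
    rw [heq]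
    exact prefix_det_nonneg k (fun i j => c j + 1 ≤ r i)
      (fun i j j' hle hp => by have := hc.monotone hle; omega)
      (fun i i' j hle hp => by have := hr.monotone hle; omega)
  · push_neg at hc0
    obtain ⟨j0, hj0⟩ := hc0
    match k, r, c, hr, hc, entry, j0, hj0 with
    | k + 1, r, c, hr, hc, entry, j0, hj0 =>
    have hc00 : c 0 = 0 := by
      have := hc.monotone (Fin.zero_le j0); omega
    have hcpos : ∀ j : Fin (k+1), j ≠ 0 → c j ≠ 0 := by
      intro j hj
      have : c 0 < c j := hc (by
        rcases Fin.pos_iff_ne_zero.mpr hj with h; exact h)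
      omega
    set A : Matrix (Fin (k+1)) (Fin (k+1)) ℝ := Matrix.of fun i j =>
      hess (fun n => if n = 0 then 2 else 1) (fun n => if n ≤ 1 then 0 else 1) (r i) (c j) with hA
    set u : Fin (k+1) → ℝ := fun _ => 1 with hu
    set v : Fin (k+1) → ℝ := fun i => if r i = 0 then 1 else 0 with hv
    have hsplit : A = A.updateCol 0 (u + v) := by
      ext i j
      rw [Matrix.updateCol_apply]
      split_ifs with h
      · subst h
        simp only [hA, Matrix.of_apply, hess, hc00, if_pos rfl, Pi.add_apply, hu, hv]
        split_ifs <;> norm_num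
      · rfl
    rw [hsplit, Matrix.det_updateCol_add]
    have h1 : 0 ≤ (A.updateCol 0 u).det := by
      have heq : A.updateCol 0 u =
          Matrix.of fun i j => if (j = 0 ∨ c j + 1 ≤ r i) then (1:ℝ) else 0 := by
        ext i j
        rw [Matrix.updateCol_apply]
        by_cases h : j = 0
        · simp [h, hu]
        · rw [if_neg h]
          simp only [hA, Matrix.of_apply]
          rw [entry i j (hcpos j h)]
          by_cases h2 : c j + 1 ≤ r i
          · simp [h2]
          · simp [h2, h]
      rw [heq]
      refine prefix_det_nonneg _ (fun i j => j = 0 ∨ c j + 1 ≤ r i) ?_ ?_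
      · intro i j j' hle hp
        rcases hp with h | h
        · subst h
          left; exact Fin.le_zero_iff.mp hle
        · by_cases hj' : j' = 0
          · left; exact hj'
          · right; have := hc.monotone hle; omega
      · intro i i' j hle hp
        rcases hp with h | h
        · left; exact h
        · right; have := hr.monotone hle; omega
    have h2 : 0 ≤ (A.updateCol 0 v).det := by
      by_cases hr0 : r 0 = 0
      · rw [Matrix.det_succ_column_zero]
        rw [Finset.sum_eq_single 0]
        · have hA00 : (A.updateCol 0 v) 0 0 = 1 := by
            rw [Matrix.updateCol_apply, if_pos rfl, hv]
            simp [hr0]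
          rw [hA00]
          simp only [Fin.val_zero, pow_zero, one_mul, Fin.succAbove_zero]
          have heq : (A.updateCol 0 v).submatrix Fin.succ Fin.succ =
              Matrix.of fun i j : Fin k => if c j.succ + 1 ≤ r i.succ then (1:ℝ) else 0 := by
            ext i j
            rw [Matrix.submatrix_apply, Matrix.updateCol_apply,
              if_neg (Fin.succ_ne_zero j)]
            simpa [hA] using entry i.succ j.succ (hcpos _ (Fin.succ_ne_zero j))
          rw [heq]
          exact prefix_det_nonneg k (fun i j => c j.succ + 1 ≤ r i.succ)
            (fun i j j' hle hp => by
              have := hc.monotone (show j'.succ ≤ j.succ by simpa using hle); omega)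
            (fun i i' j hle hp => by
              have := hr.monotone (show i.succ ≤ i'.succ by simpa using hle); omega)
        · intro i _ hne
          have hrine : r i ≠ 0 := by
            have : r 0 < r i := hr (Fin.pos_iff_ne_zero.mpr hne)
            omega
          rw [Matrix.updateCol_apply, if_pos rfl, hv]
          simp [hrine]
        · simp
      · rw [Matrix.det_eq_zero_of_column_eq_zero 0]
        intro i
        rw [Matrix.updateCol_apply, if_pos rfl, hv]
        have : r i ≠ 0 := by
          have := hr.monotone (Fin.zero_le i); omega
        simp [this]
    linarith
end
end

section
/- The Lucas matrix [L_{n,k}]_{n,k≥0}, whose entries are the coefficients of the Lucas polynomials, is totally positive. -/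
open PowerSeries

noncomputable section

namespace Stmt14Aux

open Finset Matrix

/-- first column sequence (2,1,1,…). -/
def vseq : ℕ → ℝ := fun n => if n = 0 then 2 else 1

lemma vseq_nonneg (n : ℕ) : 0 ≤ vseq n := by unfold vseq; split <;> norm_num

/-- The transposed Lucas coefficient array, built row by row. -/
def Nmat : ℕ → ℕ → ℝ
  | 0 => vseq
  | k + 1 => fun n => ∑ m ∈ Finset.range (n - 1), Nmat k m

/-- Total positivity for minors with row indices bounded by K. -/
def TPUpTo (K : ℕ) (X : ℕ → ℕ → ℝ) : Prop :=
  ∀ (s : ℕ) (r c : Fin s → ℕ), StrictMono r → StrictMono c → (∀ i, r i ≤ K) →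
    0 ≤ (Matrix.of fun i j => X (r i) (c j)).det

lemma strictMono_sub {s : ℕ} {f : Fin s → ℕ} (hf : StrictMono f) (h1 : ∀ i, 1 ≤ f i) :
    StrictMono fun i => f i - 1 := by
  intro i j hij
  have ha := hf hij
  have hb := h1 i
  show f i - 1 < f j - 1
  omega

/-- Add column m to column m+1. -/
def addCol (X : ℕ → ℕ → ℝ) (m : ℕ) : ℕ → ℕ → ℝ :=
  fun i n => if n = m + 1 then X i m + X i (m + 1) else X i n

lemma tp_addCol {K : ℕ} {X : ℕ → ℕ → ℝ} (hX : TPUpTo K X) (m : ℕ) :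
    TPUpTo K (addCol X m) := by
  intro s r c hr hc hrK
  by_cases hex : ∃ j, c j = m + 1
  · obtain ⟨j₀, hj₀⟩ := hex
    have hcol : (Matrix.of fun i j => addCol X m (r i) (c j)) =
        (Matrix.of fun i j => X (r i) (c j)).updateCol j₀
          ((fun i => X (r i) m) + fun i => X (r i) (m + 1)) := by
      ext i j
      by_cases hj : j = j₀
      · subst hj
        simp [Matrix.updateCol_self, addCol, hj₀]
      · have hne : c j ≠ m + 1 := fun h => hj (hc.injective (h.trans hj₀.symm))
        simp [Matrix.updateCol_ne hj, addCol, hne]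
    rw [hcol, Matrix.det_updateCol_add]
    have h2 : (Matrix.of fun i j => X (r i) (c j)).updateCol j₀ (fun i => X (r i) (m + 1))
        = Matrix.of fun i j => X (r i) (c j) := by
      ext i j
      rcases eq_or_ne j j₀ with hj | hj
      · subst hj; simp [Matrix.updateCol_self, hj₀]
      · simp [Matrix.updateCol_ne hj]
    have h1 : 0 ≤ ((Matrix.of fun i j => X (r i) (c j)).updateCol j₀
        (fun i => X (r i) m)).det := by
      by_cases hex2 : ∃ j₁, c j₁ = m
      · obtain ⟨j₁, hj₁⟩ := hex2
        have hne : j₁ ≠ j₀ := by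
          intro h; rw [h, hj₀] at hj₁; omega
        refine le_of_eq (Matrix.det_zero_of_column_eq hne ?_).symm
        intro i
        rw [Matrix.updateCol_ne hne, Matrix.updateCol_self]
        simp [hj₁]
      · set c' : Fin s → ℕ := Function.update c j₀ m with hc'def
        have hmono : StrictMono c' := by
          intro a b hab
          rcases eq_or_ne a j₀ with ha | ha <;> rcases eq_or_ne b j₀ with hb | hb
          · exact absurd (ha.trans hb.symm) (ne_of_lt hab)
          · have : c j₀ < c b := hc (ha ▸ hab)
            simp [hc'def, Function.update_of_ne hb, ha, hj₀] at this ⊢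
            omega
          · have h1 : c a < c j₀ := hc (hb ▸ hab)
            have h2 : c a ≠ m := fun h => hex2 ⟨a, h⟩
            simp [hc'def, Function.update_of_ne ha, hb, hj₀] at h1 ⊢
            omega
          · simpa [hc'def, Function.update_of_ne ha, Function.update_of_ne hb] using hc hab
        have heq : (Matrix.of fun i j => X (r i) (c j)).updateCol j₀
            (fun i => X (r i) m) = Matrix.of fun i j => X (r i) (c' j) := by
          ext i j
          rcases eq_or_ne j j₀ with hj | hj
          · subst hj; simp [Matrix.updateCol_self, hc'def]
          · simp [Matrix.updateCol_ne hj, hc'def, Function.update_of_ne hj]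
        rw [heq]
        exact hX s r c' hr hmono hrK
    rw [h2]
    exact add_nonneg h1 (hX s r c hr hc hrK)
  · have heq : (Matrix.of fun i j => addCol X m (r i) (c j)) =
        Matrix.of fun i j => X (r i) (c j) := by
      ext i j
      have : c j ≠ m + 1 := fun h => hex ⟨j, h⟩
      simp [addCol, this]
    rw [heq]
    exact hX s r c hr hc hrK

/-- Iterate addCol for m = 0, …, C-1. -/
def iterC (X : ℕ → ℕ → ℝ) : ℕ → ℕ → ℕ → ℝ
  | 0 => X
  | C + 1 => addCol (iterC X C) C

lemma tp_iterC {K : ℕ} {X : ℕ → ℕ → ℝ} (hX : TPUpTo K X) : ∀ C, TPUpTo K (iterC X C)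
  | 0 => hX
  | C + 1 => tp_addCol (tp_iterC hX C) C

lemma iterC_apply (X : ℕ → ℕ → ℝ) (C : ℕ) (i n : ℕ) :
    iterC X C i n = if n ≤ C then ∑ m ∈ Finset.range (n + 1), X i m else X i n := by
  induction C generalizing n with
  | zero =>
    rcases n with _ | n
    · simp [iterC]
    · simp [iterC]
  | succ C ih =>
    show addCol (iterC X C) C i n = _
    unfold addCol
    rcases eq_or_ne n (C + 1) with hn | hn
    · subst hn
      rw [if_pos rfl, ih C, ih (C + 1), if_pos (le_refl C), if_neg (by omega),
        if_pos (le_refl (C + 1)), Finset.sum_range_succ, Finset.sum_range_succ,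
        Finset.sum_range_succ]
    · rw [if_neg hn, ih n]
      by_cases h : n ≤ C
      · rw [if_pos h, if_pos (by omega)]
      · rw [if_neg h, if_neg (by omega)]

/-- Partial sums along rows (right multiplication by the upper-ones matrix). -/
def psum (X : ℕ → ℕ → ℝ) : ℕ → ℕ → ℝ := fun i n => ∑ m ∈ Finset.range (n + 1), X i m

lemma tp_psum {K : ℕ} {X : ℕ → ℕ → ℝ} (hX : TPUpTo K X) : TPUpTo K (psum X) := by
  intro s r c hr hc hrK
  cases s with
  | zero => simp [Matrix.det_fin_zero]
  | succ t =>
    have hmat : (Matrix.of fun i j => psum X (r i) (c j)) =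
        Matrix.of fun i j => iterC X (c (Fin.last t)) (r i) (c j) := by
      ext i j
      show psum X (r i) (c j) = iterC X (c (Fin.last t)) (r i) (c j)
      rw [iterC_apply]
      have : c j ≤ c (Fin.last t) := hc.monotone (Fin.le_last j)
      simp [psum, this]
    rw [hmat]
    exact tp_iterC hX (c (Fin.last t)) (t + 1) r c hr hc hrK

/-- Column 0 doubled, then all columns shifted right (right mult by P''). -/
def dup (X : ℕ → ℕ → ℝ) : ℕ → ℕ → ℝ :=
  fun i n => if n = 0 then 2 * X i 0 else X i (n - 1)

lemma tp_dup {K : ℕ} {X : ℕ → ℕ → ℝ} (hX : TPUpTo K X) : TPUpTo K (dup X) := by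
  intro s r c hr hc hrK
  cases s with
  | zero => simp [Matrix.det_fin_zero]
  | succ t =>
    by_cases hc0 : c 0 = 0
    · by_cases hc1 : ∃ j : Fin (t + 1), c j = 1
      · -- columns 0 and j₁ are proportional: det = 0
        obtain ⟨j₁, hj₁⟩ := hc1
        have hne : (0 : Fin (t + 1)) ≠ j₁ := by
          intro h; rw [← h, hc0] at hj₁; omega
        set A := Matrix.of fun (i j : Fin (t + 1)) => dup X (r i) (c j) with hA
        have hAeq : A = (A.updateCol 0 (fun i => X (r i) 0)).updateCol 0
            ((2 : ℝ) • fun i => X (r i) 0) := by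
          ext i j
          rcases eq_or_ne j 0 with hj | hj
          · subst hj; simp [hA, Matrix.updateCol_self, dup, hc0]
          · simp [Matrix.updateCol_ne hj]
        rw [hAeq, Matrix.det_updateCol_smul]
        have hz : ((A.updateCol 0 (fun i => X (r i) 0)).updateCol 0
            (fun i => X (r i) 0)).det = 0 := by
          refine Matrix.det_zero_of_column_eq hne ?_
          intro i
          rw [Matrix.updateCol_self, Matrix.updateCol_ne hne.symm,
            Matrix.updateCol_ne hne.symm]
          simp [hA, dup, hj₁]
        rw [hz, mul_zero]
      · -- c 0 = 0 and all other columns ≥ 2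
        have hge : ∀ j : Fin (t + 1), j ≠ 0 → 2 ≤ c j := by
          intro j hj
          have h0 : c 0 < c j := hc (Fin.pos_of_ne_zero hj)
          have h1 : c j ≠ 1 := fun h => hc1 ⟨j, h⟩
          omega
        set c' : Fin (t + 1) → ℕ := fun j => c j - 1 with hc'def
        have hmono : StrictMono c' := by
          intro a b hab
          have hb : b ≠ 0 := by
            intro h
            rw [h] at hab
            exact absurd hab (by simp)
          have hgb := hge b hb
          show c a - 1 < c b - 1
          rcases eq_or_ne a 0 with ha | ha
          · rw [ha, hc0]; omega
          · have h2 := hge a ha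
            have h3 := hc hab
            omega
        have hmat : (Matrix.of fun (i j : Fin (t + 1)) => dup X (r i) (c j)) =
            (Matrix.of fun i j => X (r i) (c' j)).updateCol 0
              ((2 : ℝ) • fun i => X (r i) 0) := by
          ext i j
          rcases eq_or_ne j 0 with hj | hj
          · subst hj; simp [Matrix.updateCol_self, dup, hc0]
          · have : c j ≠ 0 := by have := hge j hj; omega
            simp [Matrix.updateCol_ne hj, dup, this, hc'def]
        rw [hmat, Matrix.det_updateCol_smul]
        have hcol : (Matrix.of fun (i j : Fin (t+1)) => X (r i) (c' j)).updateCol 0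
            (fun i => X (r i) 0) = Matrix.of fun i j => X (r i) (c' j) := by
          ext i j
          rcases eq_or_ne j 0 with hj | hj
          · subst hj; simp [Matrix.updateCol_self, hc'def, hc0]
          · simp [Matrix.updateCol_ne hj]
        rw [hcol]
        have := hX (t + 1) r c' hr hmono hrK
        linarith
    · -- all columns ≥ 1: pure shift
      have h1 : ∀ j, 1 ≤ c j := by
        intro j
        have : c 0 ≤ c j := hc.monotone (Fin.zero_le j)
        omega
      have hmat : (Matrix.of fun (i j : Fin (t + 1)) => dup X (r i) (c j)) =
          Matrix.of fun i j => X (r i) (c j - 1) := by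
        ext i j
        have : c j ≠ 0 := by have := h1 j; omega
        simp [dup, this]
      rw [hmat]
      exact hX (t + 1) r (fun j => c j - 1) hr (strictMono_sub hc h1) hrK

/-- N with the 1 ⊕ · border: row 0 is e₀, elsewhere N shifted one down and right. -/
def Ymat : ℕ → ℕ → ℝ := fun k n =>
  if k = 0 then (if n = 0 then 1 else 0) else if n = 0 then 0 else Nmat (k - 1) (n - 1)

lemma tp_Y {K : ℕ} (hN : TPUpTo K Nmat) : TPUpTo (K + 1) Ymat := by
  intro s r c hr hc hrK
  cases s with
  | zero => simp [Matrix.det_fin_zero]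
  | succ t =>
    by_cases hr0 : r 0 = 0
    · by_cases hcc : c 0 = 0
      · -- expand along row 0
        have hcj : ∀ j : Fin (t + 1), j ≠ 0 → c j ≠ 0 := by
          intro j hj
          have : c 0 < c j := hc (Fin.pos_of_ne_zero hj)
          omega
        rw [Matrix.det_succ_row_zero]
        rw [Finset.sum_eq_single 0]
        · have hsub : ((Matrix.of fun i j => Ymat (r i) (c j)).submatrix Fin.succ
              (Fin.succAbove 0)) =
              Matrix.of fun (i j : Fin t) => Nmat (r i.succ - 1) (c j.succ - 1) := by
            ext i j
            have hri : r i.succ ≠ 0 := by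
              have : r 0 < r i.succ := hr (Fin.succ_pos i)
              omega
            have hcj' : c j.succ ≠ 0 := hcj j.succ (Fin.succ_ne_zero j)
            simp [Matrix.submatrix_apply, Fin.succAbove_zero, Ymat, hri, hcj']
          have hrow : ∀ i : Fin t, r i.succ - 1 ≤ K := by
            intro i
            have := hrK i.succ
            omega
          have hmr : StrictMono fun i : Fin t => r i.succ - 1 := by
            intro a b hab
            have h1 : r a.succ < r b.succ := hr (Fin.succ_lt_succ_iff.mpr hab)
            have h2 : r 0 < r a.succ := hr (Fin.succ_pos a)
            show r a.succ - 1 < r b.succ - 1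
            omega
          have hmc : StrictMono fun j : Fin t => c j.succ - 1 := by
            intro a b hab
            have h1 : c a.succ < c b.succ := hc (Fin.succ_lt_succ_iff.mpr hab)
            have h2 : c 0 < c a.succ := hc (Fin.succ_pos a)
            show c a.succ - 1 < c b.succ - 1
            omega
          have h00 : (Matrix.of fun i j => Ymat (r i) (c j)) 0 0 = 1 := by
            simp [Ymat, hr0, hcc]
          rw [hsub, h00]
          simpa using hN t _ _ hmr hmc hrow
        · intro j _ hj
          have : (Matrix.of fun i j => Ymat (r i) (c j)) 0 j = 0 := by
            simp [Ymat, hr0, hcj j hj]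
          rw [this]
          ring
        · intro h
          exact absurd (Finset.mem_univ (0 : Fin (t + 1))) h
      · -- row 0 is identically zero
        refine le_of_eq (Matrix.det_eq_zero_of_row_eq_zero 0 ?_).symm
        intro j
        have : c j ≠ 0 := by
          have : c 0 ≤ c j := hc.monotone (Fin.zero_le j)
          omega
        simp [Ymat, hr0, this]
    · -- all rows ≥ 1
      have hri : ∀ i, r i ≠ 0 := by
        intro i
        have : r 0 ≤ r i := hr.monotone (Fin.zero_le i)
        omega
      by_cases hcc : c 0 = 0
      · refine le_of_eq (Matrix.det_eq_zero_of_column_eq_zero 0 ?_).symm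
        intro i
        simp [Ymat, hri i, hcc]
      · have hcj : ∀ j, c j ≠ 0 := by
          intro j
          have : c 0 ≤ c j := hc.monotone (Fin.zero_le j)
          omega
        have hmat : (Matrix.of fun (i j : Fin (t + 1)) => Ymat (r i) (c j)) =
            Matrix.of fun i j => Nmat (r i - 1) (c j - 1) := by
          ext i j
          simp [Ymat, hri i, hcj j]
        rw [hmat]
        refine hN (t + 1) _ _ (strictMono_sub hr fun i => by have := hri i; omega)
          (strictMono_sub hc fun j => by have := hcj j; omega) ?_
        intro i
        have := hrK i
        have := hri i
        omega

lemma Nmat_eq : Nmat = dup (psum Ymat) := by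
  funext k n
  cases k with
  | zero =>
    cases n with
    | zero =>
      show vseq 0 = dup (psum Ymat) 0 0
      simp [vseq, dup, psum, Ymat]
    | succ n =>
      show vseq (n + 1) = dup (psum Ymat) 0 (n + 1)
      have : ∑ m ∈ Finset.range (n + 1), Ymat 0 m = 1 := by
        rw [Finset.sum_eq_single 0]
        · simp [Ymat]
        · intro m _ hm; simp [Ymat, hm]
        · intro h; exact absurd (Finset.mem_range.mpr (by omega)) h
      simp [vseq, dup, psum, this]
  | succ k =>
    cases n with
    | zero =>
      show Nmat (k + 1) 0 = dup (psum Ymat) (k + 1) 0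
      simp [Nmat, dup, psum, Ymat]
    | succ n =>
      show Nmat (k + 1) (n + 1) = dup (psum Ymat) (k + 1) (n + 1)
      have : dup (psum Ymat) (k + 1) (n + 1) = ∑ m ∈ Finset.range (n + 1), Ymat (k + 1) m := by
        simp [dup, psum]
      rw [this, Finset.sum_range_succ']
      have h0 : Ymat (k + 1) 0 = 0 := by simp [Ymat]
      have h1 : ∀ m, Ymat (k + 1) (m + 1) = Nmat k m := by intro m; simp [Ymat]
      simp only [h0, h1, add_zero]
      show Nmat (k + 1) (n + 1) = _
      simp [Nmat]
  
lemma tp_N : ∀ K, TPUpTo K Nmat := by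
  intro K
  induction K with
  | zero =>
    intro s r c hr hc hrK
    match s, r, c, hr, hc, hrK with
    | 0, r, c, hr, hc, hrK => simp [Matrix.det_fin_zero]
    | 1, r, c, hr, hc, hrK =>
      rw [Matrix.det_fin_one]
      have h0 : r 0 = 0 := Nat.le_zero.mp (hrK 0)
      show 0 ≤ Nmat (r 0) (c 0)
      rw [h0]
      exact vseq_nonneg _
    | (t + 2), r, c, hr, hc, hrK =>
      have h01 : r 0 < r 1 := hr (by simp [Fin.lt_def])
      have := hrK 0
      have := hrK 1
      omega
  | succ K ih =>
    rw [Nmat_eq]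
    exact tp_dup (tp_psum (tp_Y ih))

lemma lucas_coeff_zero (n : ℕ) : (lucas n).coeff 0 = vseq n := by
  induction n using Nat.twoStepInduction with
  | zero => simp [lucas, vseq]
  | one => simp [lucas, vseq]
  | more n ih1 ih2 =>
    show (lucas (n + 2)).coeff 0 = vseq (n + 2)
    simp only [lucas, Polynomial.coeff_add, Polynomial.mul_coeff_zero,
      Polynomial.coeff_X_zero, zero_mul, add_zero, ih2, vseq]
    simp

lemma lucas_coeff_succ (n k : ℕ) :
    (lucas n).coeff (k + 1) = ∑ m ∈ Finset.range (n - 1), (lucas m).coeff k := by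
  induction n using Nat.twoStepInduction generalizing k with
  | zero => simp [lucas]
  | one => simp [lucas, Polynomial.coeff_one]
  | more n ih1 ih2 =>
    show (lucas (n + 2)).coeff (k + 1) = _
    simp only [lucas, Polynomial.coeff_add, Polynomial.coeff_X_mul, ih2]
    have h1 : n + 1 - 1 = n := by omega
    have h2 : n + 2 - 1 = n + 1 := by omega
    rw [h1, h2, Finset.sum_range_succ]

lemma lucas_coeff_eq (k n : ℕ) : (lucas n).coeff k = Nmat k n := by
  induction k generalizing n with
  | zero => rw [lucas_coeff_zero]; rfl
  | succ k ih =>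
    rw [lucas_coeff_succ]
    show _ = ∑ m ∈ Finset.range (n - 1), Nmat k m
    exact Finset.sum_congr rfl fun m _ => ih m

end Stmt14Aux

theorem stmt14 : TotallyPos (fun n k => (lucas n).coeff k) := by
  intro s r c hr hc
  cases s with
  | zero => simp [Matrix.det_fin_zero]
  | succ t =>
    have hdet : (Matrix.of fun i j => (lucas (r i)).coeff (c j)).det =
        (Matrix.of fun i j => Stmt14Aux.Nmat (c i) (r j)).det := by
      rw [← Matrix.det_transpose (Matrix.of fun i j => Stmt14Aux.Nmat (c i) (r j))]
      congr 1
      ext i j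
      simp [Matrix.transpose_apply, Stmt14Aux.lucas_coeff_eq]
    show 0 ≤ (Matrix.of fun i j => (lucas (r i)).coeff (c j)).det
    rw [hdet]
    exact Stmt14Aux.tp_N (c (Fin.last t)) (t + 1) c r hc hr
      (fun i => hc.monotone (Fin.le_last i))
end
end
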